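/- Suppose for every i ∈ {1,...,M} and every k, the quadratic form z ↦ zᵀ(A_iᵀP_k + P_kA_i)z is bounded by B‖z‖² where B = max_{i,k} ‖A_iᵀP_k + P_kA_i‖·1, and let V(z) = min_k zᵀP_kz with P_k symmetric positive definite and V(z) ≥ C⁻‖z‖². If min_i DV(z; A_i z) ≤ −3κ V(z) for all z, and 0 < h₀ ≤ κ C⁻ / max_{i,k} ‖A_iᵀ(A_iᵀP_k + P_kA_i) + (A_iᵀP_k + P_kA_i)A_i‖, then for the feedback law ν(z) = argmin_i DV(z; A_i z) and any 0 < t < h₀: DV(e^{A_{ν(z)}t} z; A_{ν(z)} e^{A_{ν(z)}t} z) ≤ DV(z; A_{ν(z)}z) + t·(V(z)/C⁻)·max_{i,k}‖A_iᵀ(A_iᵀP_k+P_kA_i)+(A_iᵀP_k+P_kA_i)A_i‖ ≤ −2κ V(z). -/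

import Mathlib

open Matrix Filter Topology Real Set MeasureTheory

noncomputable def toE {n : ℕ} (A : Matrix (Fin n) (Fin n) ℝ) :
    EuclideanSpace ℝ (Fin n) →L[ℝ] EuclideanSpace ℝ (Fin n) :=
  Matrix.toEuclideanCLM (𝕜 := ℝ) A

/-- The quadratic form `xᵀ P x`. -/
noncomputable def quad {n : ℕ} (P : Matrix (Fin n) (Fin n) ℝ)
    (x : EuclideanSpace ℝ (Fin n)) : ℝ := inner ℝ x (toE P x)

/-- The one-sided directional derivative `DV(x;η)` of `V` at `x` in direction `η`
(defined via the limit along `δ ↓ 0`, when it exists). -/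
noncomputable def DV {d : ℕ} (V : EuclideanSpace ℝ (Fin d) → ℝ)
    (x η : EuclideanSpace ℝ (Fin d)) : ℝ :=
  limUnder (𝓝[>] (0 : ℝ)) fun δ => (V (x + δ • η) - V x) / δ

theorem tendsto_inf' {ι α : Type*} {l : Filter α} (s : Finset ι) (hs : s.Nonempty)
    (f : ι → α → ℝ) (g : ι → ℝ) (h : ∀ i ∈ s, Tendsto (f i) l (𝓝 (g i))) :
    Tendsto (fun x => s.inf' hs (fun i => f i x)) l (𝓝 (s.inf' hs g)) := by
  induction hs using Finset.Nonempty.cons_induction with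
  | singleton a => simpa using h a (by simp)
  | cons a s ha hs ih =>
      simp only [Finset.inf'_cons hs]
      exact (h a (by simp)).min (ih (fun i hi => h i (by simp [hi])))

theorem continuous_inf' {ι : Type*} (s : Finset ι) (hs : s.Nonempty)
    (f : ι → ℝ → ℝ) (h : ∀ i ∈ s, Continuous (f i)) :
    Continuous (fun x => s.inf' hs (fun i => f i x)) := by
  induction hs using Finset.Nonempty.cons_induction with
  | singleton a => simpa using h a (by simp)
  | cons a s ha hs ih =>
      simp only [Finset.inf'_cons hs]
      exact (h a (by simp)).min (ih (fun i hi => h i (by simp [hi])))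

theorem inf'_affine {ι : Type*} (s : Finset ι) (h : s.Nonempty) (f : ι → ℝ) (c δ : ℝ)
    (hδ : 0 < δ) : (s.inf' h f - c) / δ = s.inf' h (fun i => (f i - c) / δ) := by
  obtain ⟨i₀, hi₀, heq⟩ := Finset.exists_mem_eq_inf' h f
  apply le_antisymm
  · apply Finset.le_inf'
    intro i hi
    have h1 : s.inf' h f ≤ f i := Finset.inf'_le _ hi
    gcongr
  · exact (Finset.inf'_le _ hi₀).trans_eq (by rw [heq])

theorem danskin {m : ℕ} [ne : Nonempty (Fin m)] (F : Fin m → ℝ → ℝ) (d : Fin m → ℝ) (s₀ : ℝ)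
    (hF : ∀ k, HasDerivAt (F k) (d k) s₀)
    (S : Finset (Fin m)) (hSne : S.Nonempty)
    (hS : S = Finset.univ.filter (fun k => F k s₀ = ⨅ j, F j s₀)) :
    Tendsto (fun δ => ((⨅ k, F k (s₀ + δ)) - ⨅ k, F k s₀) / δ) (𝓝[>] (0:ℝ))
      (𝓝 (S.inf' hSne d)) := by
  have hWinf : ∀ δ : ℝ, (⨅ k, F k (s₀ + δ)) = Finset.univ.inf' Finset.univ_nonempty
      (fun k => F k (s₀ + δ)) := fun δ => (Finset.inf'_univ_eq_ciInf _).symm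
  have hW0 : (⨅ j, F j s₀) = Finset.univ.inf' Finset.univ_nonempty (fun k => F k s₀) :=
    (Finset.inf'_univ_eq_ciInf _).symm
  -- eventual equality of the inf with the inf over the active set
  have hev : ∀ᶠ δ in 𝓝[>] (0:ℝ),
      (⨅ k, F k (s₀ + δ)) = S.inf' hSne (fun k => F k (s₀ + δ)) := by
    by_cases hT : ∀ k, k ∈ S
    · filter_upwards with δ
      rw [hWinf δ]
      apply le_antisymm
      · exact Finset.inf'_mono _ (Finset.subset_univ S) hSne
      · exact Finset.le_inf' _ _ fun k _ => Finset.inf'_le _ (hT k)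
    · push_neg at hT
      obtain ⟨k₀, hk₀⟩ := hT
      set T : Finset (Fin m) := Finset.univ.filter (fun k => k ∉ S) with hTdef
      have hTne : T.Nonempty := ⟨k₀, by simp [hTdef, hk₀]⟩
      set ε : ℝ := T.inf' hTne (fun k => F k s₀ - ⨅ j, F j s₀) with hε
      have hεpos : 0 < ε := by
        rw [hε, Finset.lt_inf'_iff]
        intro k hk
        have hkS : k ∉ S := by simpa [hTdef] using hk
        have h1 : (⨅ j, F j s₀) ≤ F k s₀ := by
          rw [hW0]; exact Finset.inf'_le _ (Finset.mem_univ k)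
        rcases lt_or_eq_of_le h1 with h | h
        · linarith
        · exact absurd (by simp [hS, h.symm]) hkS
      have hcont : ∀ k : Fin m, ∀ᶠ δ in 𝓝[>] (0:ℝ), |F k (s₀ + δ) - F k s₀| < ε / 2 := by
        intro k
        have : Tendsto (fun δ : ℝ => F k (s₀ + δ)) (𝓝[>] (0:ℝ)) (𝓝 (F k s₀)) := by
          have h1 : Tendsto (fun δ : ℝ => s₀ + δ) (𝓝 (0:ℝ)) (𝓝 s₀) := by
            simpa using (continuous_add_left s₀).tendsto (0:ℝ)
          exact ((hF k).continuousAt.tendsto.comp (h1.mono_left nhdsWithin_le_nhds))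
        have := (this.sub (tendsto_const_nhds (x := F k s₀))).abs
        simp only [sub_self, abs_zero] at this
        exact this.eventually_lt_const (by linarith)
      have hall : ∀ᶠ δ in 𝓝[>] (0:ℝ), ∀ k : Fin m, |F k (s₀ + δ) - F k s₀| < ε / 2 :=
        eventually_all.2 hcont
      filter_upwards [hall] with δ hδ
      rw [hWinf δ]
      refine le_antisymm (Finset.inf'_mono _ (Finset.subset_univ S) hSne) ?_
      apply Finset.le_inf'
      intro k _
      by_cases hkS : k ∈ S
      · exact Finset.inf'_le _ hkS
      · obtain ⟨j, hj⟩ := id hSne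
        have hjS : F j s₀ = ⨅ i, F i s₀ := by simpa [hS] using hj
        have hkT : k ∈ T := by simp [hTdef, hkS]
        have h1 : ε ≤ F k s₀ - ⨅ i, F i s₀ := Finset.inf'_le _ hkT
        have h2 := abs_lt.1 (hδ k)
        have h3 := abs_lt.1 (hδ j)
        calc S.inf' hSne (fun k => F k (s₀ + δ)) ≤ F j (s₀ + δ) := Finset.inf'_le _ hj
          _ ≤ F k (s₀ + δ) := by linarith
  -- slopes tend to the inf of derivatives
  have hslope : ∀ k : Fin m, Tendsto (fun δ : ℝ => (F k (s₀ + δ) - F k s₀) / δ)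
      (𝓝[>] (0:ℝ)) (𝓝 (d k)) := by
    intro k
    have h1 : Tendsto (fun δ : ℝ => s₀ + δ) (𝓝[>] (0:ℝ)) (𝓝[≠] s₀) := by
      apply tendsto_nhdsWithin_of_tendsto_nhds_of_eventually_within
      · simpa using ((continuous_add_left s₀).tendsto (0:ℝ)).mono_left
          nhdsWithin_le_nhds
      · filter_upwards [self_mem_nhdsWithin] with δ (hδ : (0:ℝ) < δ)
        simp [ne_eq]; intro h; linarith [h]
    have h2 := (hasDerivAt_iff_tendsto_slope.1 (hF k)).comp h1
    refine h2.congr (fun δ => ?_)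
    simp only [slope_def_field, Function.comp, add_sub_cancel_left]
  have hmain : Tendsto (fun δ : ℝ => S.inf' hSne (fun k => (F k (s₀ + δ) - F k s₀) / δ))
      (𝓝[>] (0:ℝ)) (𝓝 (S.inf' hSne d)) :=
    tendsto_inf' S hSne _ d (fun k _ => hslope k)
  apply hmain.congr'
  filter_upwards [hev, self_mem_nhdsWithin] with δ hδeq (hδ : (0:ℝ) < δ)
  rw [hδeq, inf'_affine S hSne _ _ _ hδ]
  refine Finset.inf'_congr hSne rfl (fun k hk => ?_)
  have hk' := hk
  rw [hS, Finset.mem_filter] at hk'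
  rw [hk'.2]


theorem toE_transpose_inner {n : ℕ} (Am : Matrix (Fin n) (Fin n) ℝ)
    (x y : EuclideanSpace ℝ (Fin n)) :
    inner (𝕜 := ℝ) x (toE Amᵀ y) = inner (𝕜 := ℝ) (toE Am x) y := by
  have h1 : Amᵀ = star Am := by
    rw [Matrix.star_eq_conjTranspose]
    ext i j
    simp [Matrix.conjTranspose_apply]
  rw [h1]
  show inner ℝ x ((Matrix.toEuclideanCLM (𝕜 := ℝ) (star Am)) y) = _
  rw [map_star, ContinuousLinearMap.star_eq_adjoint]
  exact ContinuousLinearMap.adjoint_inner_right _ _ _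

theorem toE_mul_apply {n : ℕ} (Am Bm : Matrix (Fin n) (Fin n) ℝ)
    (x : EuclideanSpace ℝ (Fin n)) : toE (Am * Bm) x = toE Am (toE Bm x) := by
  show (Matrix.toEuclideanCLM (𝕜 := ℝ) (Am * Bm)) x = _
  rw [_root_.map_mul]
  rfl

theorem toE_add_apply {n : ℕ} (Am Bm : Matrix (Fin n) (Fin n) ℝ)
    (x : EuclideanSpace ℝ (Fin n)) : toE (Am + Bm) x = toE Am x + toE Bm x := by
  show (Matrix.toEuclideanCLM (𝕜 := ℝ) (Am + Bm)) x = _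
  rw [map_add]
  rfl

theorem quad_flow_deriv {n : ℕ} (Am Pm : Matrix (Fin n) (Fin n) ℝ)
    (f : ℝ → EuclideanSpace ℝ (Fin n)) (s : ℝ) (hf : HasDerivAt f (toE Am (f s)) s) :
    HasDerivAt (fun u => quad Pm (f u)) (quad (Amᵀ * Pm + Pm * Am) (f s)) s := by
  have h2 : HasDerivAt (fun u => toE Pm (f u)) (toE Pm (toE Am (f s))) s :=
    (toE Pm).hasFDerivAt.comp_hasDerivAt s hf
  have h3 := hf.inner ℝ h2
  refine h3.congr_deriv ?_
  simp only [quad, toE_add_apply, inner_add_right, toE_mul_apply]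
  rw [toE_transpose_inner]
  ring

theorem quad_abs_le {n : ℕ} (Pm : Matrix (Fin n) (Fin n) ℝ) (x : EuclideanSpace ℝ (Fin n)) :
    |quad Pm x| ≤ ‖toE Pm‖ * ‖x‖ ^ 2 := by
  calc |quad Pm x| ≤ ‖x‖ * ‖toE Pm x‖ := abs_real_inner_le_norm _ _
    _ ≤ ‖x‖ * (‖toE Pm‖ * ‖x‖) := by
        have := (toE Pm).le_opNorm x
        exact mul_le_mul_of_nonneg_left this (norm_nonneg _)
    _ = ‖toE Pm‖ * ‖x‖ ^ 2 := by ring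


theorem DV_eq_inf' {n m : ℕ} [Nonempty (Fin m)] (P : Fin m → Matrix (Fin n) (Fin n) ℝ)
    (V : EuclideanSpace ℝ (Fin n) → ℝ) (hV : ∀ z, V z = ⨅ k, quad (P k) z)
    (Am : Matrix (Fin n) (Fin n) ℝ) (y : EuclideanSpace ℝ (Fin n))
    (S : Finset (Fin m)) (hSne : S.Nonempty)
    (hS : S = Finset.univ.filter (fun k => quad (P k) y = ⨅ j, quad (P j) y)) :
    DV V y (toE Am y) = S.inf' hSne (fun k => quad (Amᵀ * P k + P k * Am) y) := by
  set c := toE Am y with hc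
  set F : Fin m → ℝ → ℝ := fun k δ => quad (P k) (y + δ • c) with hF
  have hf : ∀ s : ℝ, HasDerivAt (fun δ : ℝ => y + δ • c) c s := by
    intro s
    simpa using ((hasDerivAt_id s).smul_const c).const_add y
  have hF0 : ∀ k, F k 0 = quad (P k) y := by intro k; simp [hF]
  have hderiv : ∀ k, HasDerivAt (F k) (quad (Amᵀ * P k + P k * Am) y) 0 := by
    intro k
    have := quad_flow_deriv Am (P k) (fun δ : ℝ => y + δ • c) 0
      (by simpa [hc] using hf 0)
    simpa [hF] using this
  have hdansk := danskin F (fun k => quad (Amᵀ * P k + P k * Am) y) 0 hderiv S hSne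
    (by rw [hS]; congr 1; ext k; simp [hF0])
  apply Filter.Tendsto.limUnder_eq
  refine hdansk.congr (fun δ => ?_)
  simp only [zero_add, hV, hF]
  norm_num

theorem DV_zero {d : ℕ} (V : EuclideanSpace ℝ (Fin d) → ℝ) (x : EuclideanSpace ℝ (Fin d)) :
    DV V x 0 = 0 := by
  apply Filter.Tendsto.limUnder_eq
  have : (fun δ : ℝ => (V (x + δ • 0) - V x) / δ) = fun _ => 0 := by
    ext δ; simp
  rw [this]
  exact tendsto_const_nhds


set_option maxHeartbeats 1000000 in
/-- Key sample-and-hold estimate: under the decreasing condition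
`minᵢ DV(z; Aᵢz) ≤ -3κ V(z)` and a small enough hold time `h₀`, along the held mode
`ν(z) = argminᵢ DV(z; Aᵢz)` the directional derivative stays `≤ -2κ V(z)` on `(0, h₀)`. -/
theorem stmt17 {n m M : ℕ} (hm : 0 < m) (hM : 0 < M)
    (P : Fin m → Matrix (Fin n) (Fin n) ℝ) (hpd : ∀ k, (P k).PosDef)
    (A : Fin M → Matrix (Fin n) (Fin n) ℝ)
    (V : EuclideanSpace ℝ (Fin n) → ℝ) (hV : ∀ z, V z = ⨅ k, quad (P k) z)
    (Cm : ℝ) (hCm : 0 < Cm) (hCmV : ∀ z : EuclideanSpace ℝ (Fin n), Cm * ‖z‖ ^ 2 ≤ V z)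
    (B : ℝ) (hBdef : B = ⨆ i, ⨆ k, ‖toE ((A i)ᵀ * P k + P k * A i)‖)
    (hB : ∀ i k, ∀ z : EuclideanSpace ℝ (Fin n),
      |inner (𝕜 := ℝ) z (toE ((A i)ᵀ * P k + P k * A i) z)| ≤ B * ‖z‖ ^ 2)
    (K : ℝ) (hK : K = ⨆ i, ⨆ k,
      ‖toE ((A i)ᵀ * ((A i)ᵀ * P k + P k * A i) + ((A i)ᵀ * P k + P k * A i) * A i)‖)
    (κ : ℝ) (hκ : 0 < κ)
    (hdec : ∀ z : EuclideanSpace ℝ (Fin n), (⨅ i, DV V z (toE (A i) z)) ≤ -3 * κ * V z)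
    (h₀ : ℝ) (hh₀ : 0 < h₀) (hh₀K : h₀ * K ≤ κ * Cm)
    (ν : EuclideanSpace ℝ (Fin n) → Fin M)
    (hν : ∀ z i, DV V z (toE (A (ν z)) z) ≤ DV V z (toE (A i) z)) :
    ∀ z : EuclideanSpace ℝ (Fin n), ∀ t : ℝ, 0 < t → t < h₀ →
      DV V (NormedSpace.exp (t • toE (A (ν z))) z)
          (toE (A (ν z)) (NormedSpace.exp (t • toE (A (ν z))) z)) ≤
        DV V z (toE (A (ν z)) z) + t * (V z / Cm) * K ∧
      DV V z (toE (A (ν z)) z) + t * (V z / Cm) * K ≤ -2 * κ * V z := by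
  haveI : Nonempty (Fin m) := ⟨⟨0, hm⟩⟩
  haveI : Nonempty (Fin M) := ⟨⟨0, hM⟩⟩
  -- bound on K
  have hKb : ∀ (i' : Fin M) (k : Fin m),
      ‖toE ((A i')ᵀ * ((A i')ᵀ * P k + P k * A i') + ((A i')ᵀ * P k + P k * A i') * A i')‖ ≤ K := by
    intro i' k
    rw [hK]
    refine le_trans (le_ciSup (f := fun k' => ‖toE ((A i')ᵀ * ((A i')ᵀ * P k' + P k' * A i') +
      ((A i')ᵀ * P k' + P k' * A i') * A i')‖) (Set.Finite.bddAbove (Set.finite_range _)) k) ?_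
    exact le_ciSup (f := fun i'' => ⨆ k', ‖toE ((A i'')ᵀ * ((A i'')ᵀ * P k' + P k' * A i'') +
      ((A i'')ᵀ * P k' + P k' * A i'') * A i'')‖) (Set.Finite.bddAbove (Set.finite_range _)) i'
  have hK0 : 0 ≤ K :=
    le_trans (norm_nonneg _) (hKb (Classical.arbitrary _) (Classical.arbitrary _))
  intro z
  by_cases hz : z = 0
  · subst hz
    intro t ht ht'
    have hx0 : NormedSpace.exp (t • toE (A (ν 0))) (0 : EuclideanSpace ℝ (Fin n)) = 0 :=
      map_zero _
    have hV0 : V 0 = 0 := by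
      rw [hV]
      have : ∀ k : Fin m, quad (P k) (0 : EuclideanSpace ℝ (Fin n)) = 0 := by
        intro k; simp [quad]
      simp only [this, ciInf_const]
    have hDV0 : DV V 0 (toE (A (ν 0)) 0) = 0 := by
      rw [map_zero]; exact DV_zero V 0
    rw [hx0, map_zero, hV0, DV_zero V 0]
    norm_num
  -- main case
  have hVz : 0 < V z :=
    lt_of_lt_of_le (mul_pos hCm (pow_pos (norm_pos_iff.2 hz) 2)) (hCmV z)
  set i := ν z with hi
  set Ai := toE (A i) with hAi
  set x : ℝ → EuclideanSpace ℝ (Fin n) := fun s => NormedSpace.exp (s • Ai) z with hxdef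
  have hx0 : x 0 = z := by
    show NormedSpace.exp ((0:ℝ) • Ai) z = z
    have h0 : (0:ℝ) • Ai = 0 := zero_smul ℝ Ai
    rw [h0, NormedSpace.exp_zero, ContinuousLinearMap.one_apply]
  have hxD : ∀ s, HasDerivAt x (Ai (x s)) s := by
    intro s
    have h1 := hasDerivAt_exp_smul_const' (𝕂 := ℝ) Ai s
    have h2 := (ContinuousLinearMap.apply ℝ (EuclideanSpace ℝ (Fin n))
      z).hasFDerivAt.comp_hasDerivAt s h1
    exact h2
  set Q : Fin m → Matrix (Fin n) (Fin n) ℝ := fun k => (A i)ᵀ * P k + P k * A i with hQdef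
  set F : Fin m → ℝ → ℝ := fun k s => quad (P k) (x s) with hFdef
  set g : Fin m → ℝ → ℝ := fun k s => quad (Q k) (x s) with hgdef
  have hFD : ∀ k s, HasDerivAt (F k) (g k s) s := fun k s =>
    quad_flow_deriv (A i) (P k) x s (hxD s)
  have hgD : ∀ k s, HasDerivAt (g k) (quad ((A i)ᵀ * Q k + Q k * A i) (x s)) s := fun k s =>
    quad_flow_deriv (A i) (Q k) x s (hxD s)
  have hFc : ∀ k, Continuous (F k) := fun k =>
    continuous_iff_continuousAt.2 fun s => (hFD k s).continuousAt
  have hgc : ∀ k, Continuous (g k) := fun k =>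
    continuous_iff_continuousAt.2 fun s => (hgD k s).continuousAt
  have hgbound : ∀ k s, |quad ((A i)ᵀ * Q k + Q k * A i) (x s)| ≤ K * ‖x s‖ ^ 2 := by
    intro k s
    refine (quad_abs_le _ _).trans ?_
    exact mul_le_mul_of_nonneg_right (hKb i k) (by positivity)
  have hWc : Continuous (fun s => V (x s)) := by
    have heq : (fun s => V (x s)) =
        fun s => Finset.univ.inf' Finset.univ_nonempty (fun k => F k s) := by
      ext s; rw [hV]; exact (Finset.inf'_univ_eq_ciInf _).symm
    rw [heq]
    exact continuous_inf' _ _ _ (fun k _ => hFc k)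
  have hSne : ∀ y : EuclideanSpace ℝ (Fin n),
      (Finset.univ.filter (fun k => quad (P k) y = ⨅ j, quad (P j) y)).Nonempty := by
    intro y
    obtain ⟨k₀, hk₀mem, hk₀⟩ := Finset.exists_mem_eq_inf' (Finset.univ_nonempty)
      (fun k => quad (P k) y)
    refine ⟨k₀, Finset.mem_filter.2 ⟨Finset.mem_univ _, ?_⟩⟩
    rw [← Finset.inf'_univ_eq_ciInf]
    exact hk₀.symm
  have hDVeq : ∀ y : EuclideanSpace ℝ (Fin n), DV V y (Ai y) =
      (Finset.univ.filter (fun k => quad (P k) y = ⨅ j, quad (P j) y)).inf' (hSne y)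
        (fun k => quad (Q k) y) :=
    fun y => DV_eq_inf' P V hV (A i) y _ (hSne y) rfl
  -- the inf bound along the trajectory
  have hinfb : ∀ k : Fin m, ∀ y : EuclideanSpace ℝ (Fin n),
      (⨅ j, quad (P j) y) ≤ quad (P k) y := by
    intro k y
    rw [← Finset.inf'_univ_eq_ciInf]
    exact Finset.inf'_le _ (Finset.mem_univ k)
  -- key estimate
  have key : ∀ t : ℝ, 0 < t → (∀ s ∈ Icc (0:ℝ) t, V (x s) ≤ V z) →
      DV V (x t) (Ai (x t)) ≤ DV V z (Ai z) + t * (V z / Cm) * K := by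
    intro t ht hmono
    set KV := K * (V z / Cm) with hKV
    have hKV0 : 0 ≤ KV := mul_nonneg hK0 (div_nonneg hVz.le hCm.le)
    have hnormb : ∀ s ∈ Icc (0:ℝ) t, K * ‖x s‖ ^ 2 ≤ KV := by
      intro s hs
      refine mul_le_mul_of_nonneg_left ?_ hK0
      rw [le_div_iff₀ hCm, mul_comm]
      exact le_trans (hCmV (x s)) (hmono s hs)
    obtain ⟨k, hkmem, hkeq⟩ := Finset.exists_mem_eq_inf' (hSne (x t)) (fun k => quad (Q k) (x t))
    obtain ⟨j, hjmem, hjeq⟩ := Finset.exists_mem_eq_inf' (hSne z) (fun k => quad (Q k) z)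
    have hDVz : DV V z (Ai z) = quad (Q j) z := by rw [hDVeq z, hjeq]
    have hDVt : DV V (x t) (Ai (x t)) ≤ quad (Q k) (x t) := by
      rw [hDVeq (x t)]; exact Finset.inf'_le _ hkmem
    have hkact : quad (P k) (x t) = ⨅ j', quad (P j') (x t) := (Finset.mem_filter.1 hkmem).2
    have hjact : quad (P j) z = ⨅ j', quad (P j') z := (Finset.mem_filter.1 hjmem).2
    have hφt : F k t - F j t ≤ 0 := by
      have h1 : (⨅ j', quad (P j') (x t)) ≤ quad (P j) (x t) := hinfb j (x t)
      have h2 : F k t = quad (P k) (x t) := rfl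
      have h3 : F j t = quad (P j) (x t) := rfl
      rw [h2, h3, hkact]; linarith
    have hφ0 : 0 ≤ F k 0 - F j 0 := by
      have h1 : (⨅ j', quad (P j') z) ≤ quad (P k) z := hinfb k z
      have h2 : F k 0 = quad (P k) z := by rw [hFdef]; simp only [hx0]
      have h3 : F j 0 = quad (P j) z := by rw [hFdef]; simp only [hx0]
      rw [h2, h3, hjact]; linarith
    -- MVT 1 : find c with (g k - g j) c ≤ 0
    obtain ⟨c, hc, hceq⟩ := exists_hasDerivAt_eq_slope (fun s => F k s - F j s)
      (fun s => g k s - g j s) ht (((hFc k).sub (hFc j)).continuousOn)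
      (fun s _ => (hFD k s).sub (hFD j s))
    have hgkj : g k c ≤ g j c := by
      have hslope : ((F k t - F j t) - (F k 0 - F j 0)) / (t - 0) ≤ 0 := by
        apply div_nonpos_of_nonpos_of_nonneg <;> linarith
      have h' : g k c - g j c = ((F k t - F j t) - (F k 0 - F j 0)) / (t - 0) := hceq
      linarith
    -- MVT 2 : g k on [c, t]
    obtain ⟨c2, hc2, hc2eq⟩ := exists_hasDerivAt_eq_slope (g k)
      (fun s => quad ((A i)ᵀ * Q k + Q k * A i) (x s)) hc.2 ((hgc k).continuousOn)
      (fun s _ => hgD k s)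
    have hgkt : g k t ≤ g k c + (t - c) * KV := by
      have hb : quad ((A i)ᵀ * Q k + Q k * A i) (x c2) ≤ KV :=
        le_trans (le_abs_self _) ((hgbound k c2).trans (hnormb c2
          ⟨le_trans hc.1.le hc2.1.le, hc2.2.le⟩))
      have h1 : (g k t - g k c) / (t - c) ≤ KV := by rw [← hc2eq]; exact hb
      have h2 : 0 < t - c := by linarith [hc.2]
      rw [div_le_iff₀ h2] at h1
      linarith
    -- MVT 3 : g j on [0, c]
    obtain ⟨c3, hc3, hc3eq⟩ := exists_hasDerivAt_eq_slope (g j)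
      (fun s => quad ((A i)ᵀ * Q j + Q j * A i) (x s)) hc.1 ((hgc j).continuousOn)
      (fun s _ => hgD j s)
    have hgjc : g j c ≤ g j 0 + c * KV := by
      have hb : quad ((A i)ᵀ * Q j + Q j * A i) (x c3) ≤ KV :=
        le_trans (le_abs_self _) ((hgbound j c3).trans (hnormb c3
          ⟨hc3.1.le, le_trans hc3.2.le hc.2.le⟩))
      have h1 : (g j c - g j 0) / (c - 0) ≤ KV := by rw [← hc3eq]; exact hb
      have h2 : 0 < c - 0 := by linarith [hc.1]
      rw [div_le_iff₀ h2] at h1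
      linarith
    have hgj0 : g j 0 = quad (Q j) z := by rw [hgdef]; simp only [hx0]
    have hgkt' : g k t = quad (Q k) (x t) := rfl
    have hfinal : quad (Q k) (x t) ≤ quad (Q j) z + t * KV := by
      rw [← hgkt', ← hgj0]
      linarith
    rw [hDVz]
    calc DV V (x t) (Ai (x t)) ≤ quad (Q k) (x t) := hDVt
      _ ≤ quad (Q j) z + t * KV := hfinal
      _ = quad (Q j) z + t * (V z / Cm) * K := by rw [hKV]; ring
  -- second inequality ingredients
  have h3κ : DV V z (Ai z) ≤ -3 * κ * V z :=
    le_trans (le_ciInf (fun i' => hν z i')) (hdec z)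
  have htb : ∀ t : ℝ, 0 ≤ t → t ≤ h₀ → t * (V z / Cm) * K ≤ κ * V z := by
    intro t ht ht'
    have h1 : t * (V z / Cm) * K ≤ h₀ * (V z / Cm) * K :=
      mul_le_mul_of_nonneg_right
        (mul_le_mul_of_nonneg_right ht' (div_nonneg hVz.le hCm.le)) hK0
    have h2 : h₀ * (V z / Cm) * K = (h₀ * K) * (V z / Cm) := by ring
    have h3 : (h₀ * K) * (V z / Cm) ≤ (κ * Cm) * (V z / Cm) :=
      mul_le_mul_of_nonneg_right hh₀K (div_nonneg hVz.le hCm.le)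
    have h4 : (κ * Cm) * (V z / Cm) = κ * V z := by field_simp
    linarith
  -- monotonicity of V along the trajectory
  have mono : ∀ t : ℝ, 0 < t → t < h₀ → ∀ s ∈ Icc (0:ℝ) t, V (x s) ≤ V z := by
    intro t ht ht'
    set Sset : Set ℝ := {s | s ∈ Icc (0:ℝ) t ∧ ∀ r ∈ Icc (0:ℝ) s, V (x r) ≤ V z} with hSset
    have h0S : (0:ℝ) ∈ Sset := by
      refine ⟨⟨le_refl 0, ht.le⟩, fun r hr => ?_⟩
      have : r = 0 := le_antisymm hr.2 hr.1
      rw [this, hx0]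
    have hbdd : BddAbove Sset := ⟨t, fun s hs => hs.1.2⟩
    set u := sSup Sset with hu
    have hu0 : 0 ≤ u := le_csSup hbdd h0S
    have hut : u ≤ t := csSup_le ⟨0, h0S⟩ (fun s hs => hs.1.2)
    have hlt : ∀ r : ℝ, 0 ≤ r → r < u → V (x r) ≤ V z := by
      intro r hr0 hru
      obtain ⟨s, hsS, hrs⟩ := exists_lt_of_lt_csSup ⟨0, h0S⟩ hru
      exact hsS.2 r ⟨hr0, hrs.le⟩
    have hWu : ∀ r ∈ Icc (0:ℝ) u, V (x r) ≤ V z := by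
      intro r hr
      rcases lt_or_eq_of_le hr.2 with h | h
      · exact hlt r hr.1 h
      · rcases lt_or_eq_of_le hr.1 with h0r | h0r
        · refine le_of_tendsto (hWc.continuousAt.tendsto.mono_left
            (nhdsWithin_le_nhds (s := Iio r))) ?_
          filter_upwards [Ioo_mem_nhdsLT_of_mem (⟨h0r, le_refl r⟩ : r ∈ Ioc 0 r)]
            with r' hr'
          exact hlt r' hr'.1.le (lt_of_lt_of_le hr'.2 hr.2)
        · rw [← h0r, hx0]
    have huS : u ∈ Sset := ⟨⟨hu0, hut⟩, hWu⟩
    rcases lt_or_eq_of_le hut with hutlt | hueq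
    · exfalso
      -- right derivative at u is negative
      have hL : DV V (x u) (Ai (x u)) < 0 := by
        rcases eq_or_lt_of_le hu0 with h0u | h0u
        · have hxu : x u = z := by rw [← h0u, hx0]
          rw [hxu]
          nlinarith [h3κ, mul_pos hκ hVz]
        · have h1 := key u h0u (fun s hs => hWu s hs)
          have h2 := htb u h0u.le (le_of_lt (lt_trans hutlt ht'))
          nlinarith [h3κ, mul_pos hκ hVz]
      have hdansk := danskin F (fun k => g k u) u (fun k => hFD k u)
        (Finset.univ.filter (fun k => quad (P k) (x u) = ⨅ j, quad (P j) (x u)))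
        (hSne (x u)) rfl
      have hL' : Tendsto (fun δ => (V (x (u + δ)) - V (x u)) / δ) (𝓝[>] (0:ℝ))
          (𝓝 (DV V (x u) (Ai (x u)))) := by
        rw [hDVeq (x u)]
        refine hdansk.congr (fun δ => ?_)
        rw [hV (x (u + δ)), hV (x u)]
      have hev : ∀ᶠ δ in 𝓝[>] (0:ℝ), (V (x (u + δ)) - V (x u)) / δ < 0 :=
        hL'.eventually_lt_const hL
      obtain ⟨ε, hε, hsub⟩ := mem_nhdsGT_iff_exists_Ioo_subset.1 hev
      have hε0 : (0:ℝ) < ε := hε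
      set δ' := min (ε / 2) ((t - u) / 2) with hδ'
      have hδ'0 : 0 < δ' := lt_min (by linarith) (by linarith)
      have hpS : u + δ' ∈ Sset := by
        refine ⟨⟨by linarith, ?_⟩, ?_⟩
        · have : δ' ≤ (t - u) / 2 := min_le_right _ _
          linarith
        · intro r hr
          rcases le_or_gt r u with hru | hru
          · exact hWu r ⟨hr.1, hru⟩
          · have hδr : r - u ∈ Ioo (0:ℝ) ε := by
              constructor
              · linarith
              · have h1 : r - u ≤ δ' := by linarith [hr.2]
                have h2 : δ' ≤ ε / 2 := min_le_left _ _
                linarith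
            have := hsub hδr
            simp only [Set.mem_setOf_eq] at this
            have hxr : V (x (u + (r - u))) - V (x u) < 0 := by
              have hpos : 0 < r - u := by linarith
              by_contra hcon
              push_neg at hcon
              have := div_nonneg hcon hpos.le
              linarith [this]
            have : V (x r) < V (x u) := by
              have : u + (r - u) = r := by ring
              rw [this] at hxr
              linarith
            exact le_trans this.le (hWu u ⟨hu0, le_refl u⟩)
      have := le_csSup hbdd hpS
      linarith
    · intro s hs
      rw [← hueq] at hs
      exact hWu s hs
  -- conclude
  intro t ht ht'
  have hmono := mono t ht ht'
  have h1 := key t ht hmono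
  refine ⟨h1, ?_⟩
  have h2 := htb t ht.le ht'.le
  nlinarith [h3κ, mul_pos hκ hVz]
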